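/- Let T be an X-tree, let L ⊆ binom(X,2) satisfy X = ∪_{c∈L} c, and let c = xx' ∈ L be a cord. Assume that for every subset A of X − {x,x'} for which A, X−A is a virtual T-split, the restriction of the graph Γ(L,c) to A is connected. Let ω be a proper edge weighting of T and let T' be another X-tree with proper edge weighting ω' such that (T,ω) and (T',ω') are L-isometric. Then D_ω(xx'|yy') = D_{ω'}(xx'|yy') holds for any two distinct elements y,y' ∈ X − {x,x'} with xx'∥yy' ∈ Q(T). -/

import Mathlib

/- Common definitions for formalizing results of Dress, Huber & Steel,
   "Lassoing a phylogenetic tree I: Basic properties, shellings, and covers".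

   Trees are modelled as simple graphs on an ambient vertex type `U`;
   the vertex set of the tree is the support of the graph (every vertex of a
   tree with at least two vertices has degree >= 1). -/

noncomputable section
open scoped Classical

namespace Lasso

variable {U : Type}

/-- The degree of a vertex. -/
def deg (G : SimpleGraph U) (v : U) : ℕ := (G.neighborSet v).ncard

/-- A leaf is a vertex of degree `1`. -/
def IsLeaf (G : SimpleGraph U) (v : U) : Prop := deg G v = 1

/-- An interior vertex: a non-leaf vertex of the tree. -/
def Interior (G : SimpleGraph U) (v : U) : Prop := v ∈ G.support ∧ ¬ IsLeaf G v

/-- `G` is an `X`-tree: a finite tree without vertices of degree two whose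
    leaf set is exactly `X`. -/
structure IsXTree (X : Set U) (G : SimpleGraph U) : Prop where
  support_finite : G.support.Finite
  support_nonempty : G.support.Nonempty
  connected : ∀ a ∈ G.support, ∀ b ∈ G.support, G.Reachable a b
  acyclic : G.IsAcyclic
  no_deg_two : ∀ v : U, deg G v ≠ 2
  leaves_eq : X = {v : U | IsLeaf G v}

/-- An edge weighting of `G`: nonnegative, and zero away from the edges of `G`
    (so that it represents an element of `ℝ_{≥0}^E`). -/
structure IsWeighting (G : SimpleGraph U) (ω : Sym2 U → ℝ) : Prop where
  nonneg : ∀ e, 0 ≤ ω e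
  zero_off : ∀ e, e ∉ G.edgeSet → ω e = 0

/-- A proper edge weighting: in addition strictly positive on interior edges
    (edges both of whose endpoints are non-leaves). -/
structure IsProperWeighting (G : SimpleGraph U) (ω : Sym2 U → ℝ)
    extends IsWeighting G ω : Prop where
  interior_pos : ∀ e ∈ G.edgeSet, (∀ u ∈ e, ¬ IsLeaf G u) → 0 < ω e

/-- The set `E_T(x|y)` of edges separating `x` from `y`, i.e. the edges lying
    on every walk from `x` to `y` (in a tree: the edges of the path). -/
def pathEdges (G : SimpleGraph U) (x y : U) : Set (Sym2 U) :=
  {e | e ∈ G.edgeSet ∧ ∀ p : G.Walk x y, e ∈ p.edges}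

/-- The induced distance `D_ω(x,y)`. -/
def tdist (G : SimpleGraph U) (ω : Sym2 U → ℝ) (x y : U) : ℝ :=
  ∑ᶠ e ∈ pathEdges G x y, ω e

/-- Path edge set of an unordered pair. -/
def pairPathEdges (G : SimpleGraph U) (c : Sym2 U) : Set (Sym2 U) :=
  {e | e ∈ G.edgeSet ∧ ∀ x y : U, c = s(x, y) → ∀ p : G.Walk x y, e ∈ p.edges}

/-- `D_ω` on an unordered pair (a cord); `λ^T_c(ω)`. -/
def pdist (G : SimpleGraph U) (ω : Sym2 U → ℝ) (c : Sym2 U) : ℝ :=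
  ∑ᶠ e ∈ pairPathEdges G c, ω e

/-- `(G,ω)` and `(G',ω')` are `L`-isometric. -/
def LIso (L : Set (Sym2 U)) (G : SimpleGraph U) (ω : Sym2 U → ℝ)
    (G' : SimpleGraph U) (ω' : Sym2 U → ℝ) : Prop :=
  ∀ x y : U, s(x, y) ∈ L → tdist G ω x y = tdist G' ω' x y

/-- `L` is a set of cords of `X`: 2-element subsets of `X`. -/
def IsCordSet (X : Set U) (L : Set (Sym2 U)) : Prop :=
  ∀ c ∈ L, ¬ c.IsDiag ∧ ∀ u ∈ c, u ∈ X

/-- The union of all cords in `L`. -/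
def cup (L : Set (Sym2 U)) : Set U := {v | ∃ c ∈ L, v ∈ c}

/-- `L` is an edge-weight lasso for `G`. -/
def EdgeWeightLasso (G : SimpleGraph U) (L : Set (Sym2 U)) : Prop :=
  ∀ ω ω' : Sym2 U → ℝ, IsProperWeighting G ω → IsProperWeighting G ω' →
    LIso L G ω G ω' → ω = ω'

/-- `G ≃ G'` via a graph isomorphism fixing `X` pointwise. -/
def FixingIso (X : Set U) (G G' : SimpleGraph U) : Prop :=
  ∃ φ : G ≃g G', ∀ x ∈ X, φ x = x

/-- `(G,ω)` and `(G',ω')` are isometric: a graph isomorphism fixing `X`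
    pointwise and preserving edge weights. -/
def FixingIsometry (X : Set U) (G G' : SimpleGraph U) (ω ω' : Sym2 U → ℝ) : Prop :=
  ∃ φ : G ≃g G', (∀ x ∈ X, φ x = x) ∧
    ∀ e ∈ G.edgeSet, ω' (Sym2.map (fun u => φ u) e) = ω e

/-- `L` is a topological lasso for the `X`-tree `G`. -/
def TopologicalLasso (X : Set U) (G : SimpleGraph U) (L : Set (Sym2 U)) : Prop :=
  ∀ G' : SimpleGraph U, IsXTree X G' →
    ∀ ω ω' : Sym2 U → ℝ, IsProperWeighting G ω → IsProperWeighting G' ω' →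
      LIso L G ω G' ω' → FixingIso X G G'

/-- `L` is a strong lasso for the `X`-tree `G`. -/
def StrongLasso (X : Set U) (G : SimpleGraph U) (L : Set (Sym2 U)) : Prop :=
  ∀ G' : SimpleGraph U, IsXTree X G' →
    ∀ ω ω' : Sym2 U → ℝ, IsProperWeighting G ω → IsProperWeighting G' ω' →
      LIso L G ω G' ω' → FixingIsometry X G G' ω ω'

/-- `G` displays the quartet `a a' ‖ b b'`: some edge lies on all four paths
    joining `a` or `a'` to `b` or `b'`. -/
def DisplaysQ (G : SimpleGraph U) (a a' b b' : U) : Prop :=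
  ∃ e : Sym2 U, e ∈ pathEdges G a b ∧ e ∈ pathEdges G a b' ∧
    e ∈ pathEdges G a' b ∧ e ∈ pathEdges G a' b'

def Distinct4 (a b c d : U) : Prop :=
  a ≠ b ∧ a ≠ c ∧ a ≠ d ∧ b ≠ c ∧ b ≠ d ∧ c ≠ d

/-- `a a' ‖ b b' ∈ Q(G)`: a quartet on four distinct elements of `X`
    displayed by `G`. -/
def QuartetOf (X : Set U) (G : SimpleGraph U) (a a' b b' : U) : Prop :=
  a ∈ X ∧ a' ∈ X ∧ b ∈ X ∧ b' ∈ X ∧ Distinct4 a a' b b' ∧ DisplaysQ G a a' b b'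

/-- `G` displays `a a' | b b'`: it displays neither `a b ‖ a' b'` nor
    `a b' ‖ a' b`. -/
def DisplaysBar (G : SimpleGraph U) (a a' b b' : U) : Prop :=
  ¬ DisplaysQ G a b a' b' ∧ ¬ DisplaysQ G a b' a' b

/-- `A, B` is a virtual `T`-split of `X`. -/
def VirtualSplit (X : Set U) (G : SimpleGraph U) (A B : Set U) : Prop :=
  A.Nonempty ∧ B.Nonempty ∧ Disjoint A B ∧ A ∪ B = X ∧
    ∀ a ∈ A, ∀ a' ∈ A, ∀ b ∈ B, ∀ b' ∈ B, a ≠ a' → b ≠ b' → DisplaysBar G a a' b b'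

/-- `G ≤ G'` (`G'` refines `G`), via the standard characterization
    `Q(T) ⊆ Q(T')` of refinement of `X`-trees. -/
def Refines (X : Set U) (G G' : SimpleGraph U) : Prop :=
  ∀ a a' b b' : U, QuartetOf X G a a' b b' → QuartetOf X G' a a' b b'

/-- `L` is a weak lasso for (coralls) the `X`-tree `G`. -/
def WeakLasso (X : Set U) (G : SimpleGraph U) (L : Set (Sym2 U)) : Prop :=
  ∀ G' : SimpleGraph U, IsXTree X G' →
    ∀ ω ω' : Sym2 U → ℝ, IsProperWeighting G ω → IsProperWeighting G' ω' →
      LIso L G ω G' ω' → Refines X G G'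

/-- The subgraph induced on a vertex set `A`. -/
def restrict {α : Type*} (Γ : SimpleGraph α) (A : Set α) : SimpleGraph α where
  Adj u v := Γ.Adj u v ∧ u ∈ A ∧ v ∈ A
  symm := ⟨by rintro u v ⟨h, hu, hv⟩; exact ⟨h.symm, hv, hu⟩⟩
  loopless := ⟨by rintro v ⟨h, _, _⟩; exact Γ.irrefl h⟩

/-- The restriction of `Γ` to `A` is a connected graph. -/
def ConnectedOn {α : Type*} (Γ : SimpleGraph α) (A : Set α) : Prop :=
  ∀ x ∈ A, ∀ y ∈ A, (restrict Γ A).Reachable x y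

/-- The connected component of `x` in `Γ` is bipartite. -/
def ComponentBipartite {α : Type*} (Γ : SimpleGraph α) (x : α) : Prop :=
  ∃ f : α → Bool, ∀ u v : α, Γ.Reachable x u → Γ.Adj u v → f u ≠ f v

/-- No connected component (of the graph with vertex set `S`) is bipartite. -/
def StronglyNonBipartite {α : Type*} (Γ : SimpleGraph α) (S : Set α) : Prop :=
  ∀ x ∈ S, ¬ ComponentBipartite Γ x

/-- The graph `Γ` is bipartite. -/
def Bipartite {α : Type*} (Γ : SimpleGraph α) : Prop :=
  ∃ f : α → Bool, ∀ u v : α, Γ.Adj u v → f u ≠ f v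

/-- `E_v`: the set of edges of `G` containing `v`. -/
def Ev (G : SimpleGraph U) (v : U) : Set (Sym2 U) := {e | e ∈ G.edgeSet ∧ v ∈ e}

/-- The graph `G(L,v)` on the edge set `E_v`: two distinct edges at `v` are
    adjacent if some cord of `L` has both on its path. -/
def covGraph (G : SimpleGraph U) (L : Set (Sym2 U)) (v : U) : SimpleGraph (Sym2 U) where
  Adj e e' := e ≠ e' ∧ e ∈ Ev G v ∧ e' ∈ Ev G v ∧
    ∃ x y : U, s(x, y) ∈ L ∧ e ∈ pathEdges G x y ∧ e' ∈ pathEdges G x y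
  symm := ⟨by
    rintro e e' ⟨hne, he, he', x, y, hc, hp, hp'⟩
    exact ⟨hne.symm, he', he, x, y, hc, hp', hp⟩⟩
  loopless := ⟨by rintro e ⟨hne, _⟩; exact hne rfl⟩

/-- `G(L,v)` is the complete graph on `E_v`. -/
def CompleteAt (G : SimpleGraph U) (L : Set (Sym2 U)) (v : U) : Prop :=
  ∀ e ∈ Ev G v, ∀ e' ∈ Ev G v, e ≠ e' → (covGraph G L v).Adj e e'

/-- `L` is a `t`-cover of `G`. -/
def TCover (X : Set U) (G : SimpleGraph U) (L : Set (Sym2 U)) : Prop :=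
  cup L = X ∧ ∀ v : U, Interior G v → CompleteAt G L v

/-- The graph `Γ(L, c)` for the cord `c = x x'`, with vertex set `X − {x,x'}`
    and edge set `L^(c)`. -/
def cordGraphC (X : Set U) (G : SimpleGraph U) (L : Set (Sym2 U)) (x x' : U) :
    SimpleGraph U where
  Adj y y' := y ≠ y' ∧ y ≠ x ∧ y ≠ x' ∧ y' ≠ x ∧ y' ≠ x' ∧
    s(y, y') ∈ L ∧ QuartetOf X G x x' y y' ∧
    ((s(x, y) ∈ L ∧ s(x', y') ∈ L) ∨ (s(x, y') ∈ L ∧ s(x', y) ∈ L))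
  symm := ⟨by
    rintro y y' ⟨hne, h1, h2, h3, h4, hL,
      ⟨hx1, hx2, hy1, hy2, ⟨d1, d2, d3, d4, d5, d6⟩, e, p1, p2, p3, p4⟩, hor⟩
    exact ⟨hne.symm, h3, h4, h1, h2, by rwa [Sym2.eq_swap],
      ⟨hx1, hx2, hy2, hy1, ⟨d1, d3, d2, d5, d4, d6.symm⟩, e, p2, p1, p4, p3⟩, hor.symm⟩⟩
  loopless := ⟨by rintro y ⟨hne, _⟩; exact hne rfl⟩

/-- `v` lies on the path of `G` from `x` to `y`. -/
def OnPath (G : SimpleGraph U) (x y v : U) : Prop :=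
  v = x ∨ v = y ∨ ∃ e ∈ pathEdges G x y, v ∈ e

/-- `v = med_G(a,b,c)`: `v` lies on all three pairwise paths. -/
def IsMedian (G : SimpleGraph U) (a b c v : U) : Prop :=
  OnPath G a b v ∧ OnPath G a c v ∧ OnPath G b c v

/-- `L` is a triplet cover of `G`. -/
def TripletCover (X : Set U) (G : SimpleGraph U) (L : Set (Sym2 U)) : Prop :=
  ∀ v : U, Interior G v → ∃ a b c : U, a ∈ X ∧ b ∈ X ∧ c ∈ X ∧
    a ≠ b ∧ a ≠ c ∧ b ≠ c ∧
    s(a, b) ∈ L ∧ s(a, c) ∈ L ∧ s(b, c) ∈ L ∧ IsMedian G a b c v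

/-- `L` is a pointed `x`-cover of `G`. -/
def PointedCover (X : Set U) (G : SimpleGraph U) (L : Set (Sym2 U)) (x : U) : Prop :=
  cup L = X ∧ (∀ v : U, Interior G v → CompleteAt G L v) ∧
    ∀ v : U, Interior G v → ∃ a b : U, a ≠ b ∧
      s(a, x) ∈ L ∧ s(b, x) ∈ L ∧ IsMedian G a b x v

/-- Every interior vertex has degree `3`. -/
def IsBinary (G : SimpleGraph U) : Prop := ∀ v : U, Interior G v → deg G v = 3

/-- `a, b` form a `T`-cherry with common neighbour `v`. -/
def IsCherry (G : SimpleGraph U) (a b v : U) : Prop :=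
  a ≠ b ∧ IsLeaf G a ∧ IsLeaf G b ∧ G.Adj a v ∧ G.Adj b v

/-- `a, b` form a proper `T`-cherry with common neighbour `v` of degree `3`. -/
def IsProperCherry (G : SimpleGraph U) (a b v : U) : Prop :=
  IsCherry G a b v ∧ deg G v = 3

/-- `W` is a `T`-core of `G`. -/
def IsCore (G : SimpleGraph U) (W : Set U) : Prop :=
  W.Nonempty ∧ W ⊆ G.support ∧
    (∀ a ∈ W, ∀ b ∈ W, (restrict G W).Reachable a b) ∧
    ∀ v ∈ W, deg (restrict G W) v = 1 ∨ deg (restrict G W) v = deg G v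

/-- `X_W`: the leaf set of the induced tree `T_W`. -/
def coreLeaves (G : SimpleGraph U) (W : Set U) : Set U :=
  {v | v ∈ W ∧ deg (restrict G W) v = 1}

/-- `g` is the gate of `x` in `W`: the vertex of `W` closest to `x`. -/
def IsGate (G : SimpleGraph U) (W : Set U) (x g : U) : Prop :=
  g ∈ W ∧ ∀ w ∈ W, OnPath G x w g

/-- `L_W`: the cords induced on the gates. -/
def gateCords (G : SimpleGraph U) (W : Set U) (L : Set (Sym2 U)) : Set (Sym2 U) :=
  {c | ∃ p q y y' : U, s(p, q) ∈ L ∧ IsGate G W p y ∧ IsGate G W q y' ∧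
       y ≠ y' ∧ c = s(y, y')}

/-- The gate map of the cherry reduction: `a, b ↦ v`, all else fixed. -/
def cherryMap (a b v : U) : U → U := fun p => if p = a ∨ p = b then v else p

/-- `L_U` for the cherry reduction at the proper cherry `a,b` with neighbour `v`. -/
def cherryLU (L : Set (Sym2 U)) (a b v : U) : Set (Sym2 U) :=
  {c | ∃ p q : U, s(p, q) ∈ L ∧ cherryMap a b v p ≠ cherryMap a b v q ∧
       c = s(cherryMap a b v p, cherryMap a b v q)}

/-- `X(a, L^{ab}) = {y : ay ∈ L − {ab}}`. -/
def sideSet (L : Set (Sym2 U)) (a b : U) : Set U :=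
  {y | s(a, y) ∈ L ∧ s(a, y) ≠ s(a, b)}

/-- `Σ_{c ∈ LU} ρ(c)·λ^{TU}_c = 0` as a linear form on `ℝ^{E_U}`. -/
def RhoAnnihilates (TU : SimpleGraph U) (LU : Set (Sym2 U)) (ρ : Sym2 U → ℝ) : Prop :=
  ∀ η : Sym2 U → ℝ, (∀ e, e ∉ TU.edgeSet → η e = 0) →
    ∑ᶠ c ∈ LU, ρ c * pdist TU η c = 0

/-- `D_ω(ab|cd)`. -/
def Dq (G : SimpleGraph U) (ω : Sym2 U → ℝ) (a b c d : U) : ℝ :=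
  max (tdist G ω a c + tdist G ω b d) (tdist G ω a d + tdist G ω b c)
    - tdist G ω a b - tdist G ω c d

/-- The star tree on `X` with central vertex `z`. -/
def starGraph (X : Set U) (z : U) : SimpleGraph U :=
  SimpleGraph.fromEdgeSet {c | ∃ x ∈ X, c = s(x, z)}

/-- `A ∨ B`: all cords with one end in `A` and the other in `B`. -/
def vee (A B : Set U) : Set (Sym2 U) := {c | ∃ a ∈ A, ∃ b ∈ B, c = s(a, b)}

/-- A `T`-shelling of `binom(X,2) − L` with cords `aᵢbᵢ` and pivots `pᵢ, qᵢ`. -/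
def IsShelling (X : Set U) (G : SimpleGraph U) (L : Set (Sym2 U)) (m : ℕ)
    (a b p q : Fin m → U) : Prop :=
  (∀ i, a i ∈ X ∧ b i ∈ X ∧ a i ≠ b i ∧ s(a i, b i) ∉ L) ∧
  Function.Injective (fun i => s(a i, b i)) ∧
  (∀ x y : U, x ∈ X → y ∈ X → x ≠ y → s(x, y) ∉ L → ∃ i, s(x, y) = s(a i, b i)) ∧
  ∀ i : Fin m,
    p i ∈ X ∧ q i ∈ X ∧ p i ≠ q i ∧
    p i ≠ a i ∧ p i ≠ b i ∧ q i ≠ a i ∧ q i ≠ b i ∧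
    DisplaysQ G (a i) (p i) (b i) (q i) ∧
    ∀ u w : U, u ∈ ({a i, b i, p i, q i} : Set U) → w ∈ ({a i, b i, p i, q i} : Set U) →
      u ≠ w → s(u, w) ≠ s(a i, b i) →
      (s(u, w) ∈ L ∨ ∃ j : Fin m, j < i ∧ s(u, w) = s(a j, b j))

/-- `L` is an `s`-lasso for `G`. -/
def SLasso (X : Set U) (G : SimpleGraph U) (L : Set (Sym2 U)) : Prop :=
  cup L = X ∧ ∃ (m : ℕ) (a b p q : Fin m → U), IsShelling X G L m a b p q

/-- `L'_{A,B}` of Corollary 3 (the cherry construction). -/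
def LAB (L' : Set (Sym2 U)) (X : Set U) (a b : U) (A B : Set U) : Set (Sym2 U) :=
  {c | c ∈ L' ∧ ∀ u ∈ c, u ∈ X ∧ u ≠ a ∧ u ≠ b} ∪
  {c | ∃ x ∈ A ∪ {b}, c = s(a, x)} ∪
  {c | ∃ x ∈ B, c = s(b, x)}

end Lasso
namespace Lasso

variable {U : Type}

-- Phase 1 lemmas

lemma pE_edge {G : SimpleGraph U} {a b : U} {e : Sym2 U} (h : e ∈ pathEdges G a b) :
    e ∈ G.edgeSet := h.1

lemma pathEdges_comm (G : SimpleGraph U) (a b : U) : pathEdges G a b = pathEdges G b a := by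
  ext e
  constructor <;>
  · rintro ⟨he, hall⟩
    refine ⟨he, fun p => ?_⟩
    have := hall p.reverse
    rwa [SimpleGraph.Walk.edges_reverse, List.mem_reverse] at this

lemma not_pE_self {G : SimpleGraph U} {a : U} {e : Sym2 U} (h : e ∈ pathEdges G a a) : False := by
  have := h.2 SimpleGraph.Walk.nil
  simp at this

lemma pE_ne {G : SimpleGraph U} {a b : U} {e : Sym2 U} (h : e ∈ pathEdges G a b) : a ≠ b := by
  rintro rfl; exact not_pE_self h

lemma leaf_mem_support {G : SimpleGraph U} {v : U} (h : IsLeaf G v) : v ∈ G.support := by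
  obtain ⟨z, hz⟩ := Set.ncard_eq_one.mp h
  rw [SimpleGraph.mem_support]
  have : z ∈ G.neighborSet v := by rw [hz]; exact rfl
  exact ⟨z, this⟩

lemma X_support {X : Set U} {G : SimpleGraph U} (hT : IsXTree X G) {v : U} (hv : v ∈ X) :
    v ∈ G.support := leaf_mem_support (by rwa [hT.leaves_eq] at hv)

lemma exists_isPath {X : Set U} {G : SimpleGraph U} (hT : IsXTree X G) {a b : U}
    (ha : a ∈ G.support) (hb : b ∈ G.support) : ∃ p : G.Walk a b, p.IsPath := by
  obtain ⟨w⟩ := hT.connected a ha b hb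
  exact ⟨w.bypass, w.bypass_isPath⟩

lemma pathEdges_eq {X : Set U} {G : SimpleGraph U} (hT : IsXTree X G) {a b : U}
    {p : G.Walk a b} (hp : p.IsPath) {e : Sym2 U} :
    e ∈ pathEdges G a b ↔ e ∈ p.edges := by
  constructor
  · intro h; exact h.2 p
  · intro h
    refine ⟨p.edges_subset_edgeSet h, fun q => ?_⟩
    have hq : (⟨p, hp⟩ : G.Path a b) = ⟨q.bypass, q.bypass_isPath⟩ := hT.acyclic.path_unique _ _
    have : p = q.bypass := congrArg Subtype.val hq
    exact q.edges_bypass_subset (this ▸ h)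

lemma not_del_reach {X : Set U} {G : SimpleGraph U} (hT : IsXTree X G) {u v : U}
    (huv : G.Adj u v) : ¬ (G.deleteEdges {s(u,v)}).Reachable u v := by
  have hb := (SimpleGraph.isAcyclic_iff_forall_edge_isBridge.mp hT.acyclic) (G.mem_edgeSet.mpr huv)
  rw [SimpleGraph.isBridge_iff] at hb
  exact hb

lemma del_reach_aux {G : SimpleGraph U} {u v : U} :
    ∀ {p q : U}, G.Walk p q →
      ((G.deleteEdges {s(u,v)}).Reachable q u ∨ (G.deleteEdges {s(u,v)}).Reachable q v) →
      ((G.deleteEdges {s(u,v)}).Reachable p u ∨ (G.deleteEdges {s(u,v)}).Reachable p v) := by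
  intro p q w
  induction w with
  | nil => exact id
  | @cons c d q' h w' ih =>
    intro hyp
    by_cases hsb : s(c, d) = s(u, v)
    · rw [Sym2.eq_iff] at hsb
      rcases hsb with ⟨rfl, rfl⟩ | ⟨rfl, rfl⟩
      · exact Or.inl (SimpleGraph.Reachable.refl _)
      · exact Or.inr (SimpleGraph.Reachable.refl _)
    · have hadj : (G.deleteEdges {s(u,v)}).Adj c d := by
        rw [SimpleGraph.deleteEdges_adj]
        exact ⟨h, by simpa using hsb⟩
      rcases ih hyp with h' | h'
      · exact Or.inl (hadj.reachable.trans h')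
      · exact Or.inr (hadj.reachable.trans h')

lemma del_reach_or {G : SimpleGraph U} {u v : U} (huv : G.Adj u v) {a : U} (w : G.Walk a u) :
    (G.deleteEdges {s(u,v)}).Reachable a u ∨ (G.deleteEdges {s(u,v)}).Reachable a v :=
  del_reach_aux w (Or.inl (SimpleGraph.Reachable.refl _))

lemma walk_avoid_del {G : SimpleGraph U} {a b : U} {e : Sym2 U} (w : G.Walk a b)
    (hw : e ∉ w.edges) : (G.deleteEdges {e}).Reachable a b := by
  refine ⟨w.transfer _ fun f hf => ?_⟩
  rw [SimpleGraph.edgeSet_deleteEdges]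
  exact ⟨w.edges_subset_edgeSet hf, by simp; rintro rfl; exact hw hf⟩

lemma del_reach_walk {G : SimpleGraph U} {a b : U} {e : Sym2 U}
    (h : (G.deleteEdges {e}).Reachable a b) : ∃ w : G.Walk a b, e ∉ w.edges := by
  obtain ⟨w⟩ := h
  refine ⟨w.transfer G fun f hf => ((SimpleGraph.edgeSet_deleteEdges _) ▸ w.edges_subset_edgeSet hf).1, ?_⟩
  rw [SimpleGraph.Walk.edges_transfer]
  intro hmem
  have := ((SimpleGraph.edgeSet_deleteEdges _) ▸ w.edges_subset_edgeSet hmem).2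
  simp at this

lemma sep_iff_sides {X : Set U} {G : SimpleGraph U} (hT : IsXTree X G) {u v a b : U}
    (huv : G.Adj u v) (ha : a ∈ G.support) (hb : b ∈ G.support) :
    s(u,v) ∈ pathEdges G a b ↔
      ¬ ((G.deleteEdges {s(u,v)}).Reachable a u ↔ (G.deleteEdges {s(u,v)}).Reachable b u) := by
  have hu : u ∈ G.support := (SimpleGraph.mem_support _).mpr ⟨v, huv⟩
  have hv : v ∈ G.support := (SimpleGraph.mem_support _).mpr ⟨u, huv.symm⟩
  set D := G.deleteEdges {s(u,v)} with hD
  constructor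
  · intro hsep hiff
    -- construct walk avoiding e
    by_cases hra : D.Reachable a u
    · have hrb : D.Reachable b u := hiff.mp hra
      have : D.Reachable a b := hra.trans hrb.symm
      obtain ⟨w, hw⟩ := del_reach_walk this
      exact hw (hsep.2 w)
    · have hrb : ¬ D.Reachable b u := fun h => hra (hiff.mpr h)
      obtain ⟨wa⟩ := hT.connected a ha u hu
      obtain ⟨wb⟩ := hT.connected b hb u hu
      have hav : D.Reachable a v := (del_reach_or huv wa).resolve_left hra
      have hbv : D.Reachable b v := (del_reach_or huv wb).resolve_left hrb
      obtain ⟨w, hw⟩ := del_reach_walk (hav.trans hbv.symm)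
      exact hw (hsep.2 w)
  · intro hside
    by_contra hnsep
    have hne : ¬ ∀ p : G.Walk a b, s(u,v) ∈ p.edges := by
      intro hall; exact hnsep ⟨(G.mem_edgeSet.mpr huv), hall⟩
    push_neg at hne
    obtain ⟨w, hw⟩ := hne
    have hr : D.Reachable a b := walk_avoid_del w hw
    exact hside ⟨fun h => hr.symm.trans h, fun h => hr.trans h⟩

lemma sep_xor {X : Set U} {G : SimpleGraph U} (hT : IsXTree X G) {a b c : U}
    (ha : a ∈ G.support) (hb : b ∈ G.support) (hc : c ∈ G.support) (e : Sym2 U) :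
    e ∈ pathEdges G a c ↔ Xor' (e ∈ pathEdges G a b) (e ∈ pathEdges G b c) := by
  by_cases he : e ∈ G.edgeSet
  · induction e with
    | _ u v =>
      have huv : G.Adj u v := he
      rw [sep_iff_sides hT huv ha hc, sep_iff_sides hT huv ha hb, sep_iff_sides hT huv hb hc,
        Xor', Xor]
      tauto
  · constructor
    · intro h; exact absurd h.1 he
    · rintro (⟨h, -⟩ | ⟨h, -⟩) <;> exact absurd h.1 he


/-- Split compatibility: no two edges inducing crossing quartet splits.
`e` separates `{a,b}` from `{c,d}`; `f` separates `{a,c}` from `{b,d}`. -/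
lemma compat {X : Set U} {G : SimpleGraph U} (hT : IsXTree X G) {a b c d : U}
    (ha : a ∈ G.support) (hb : b ∈ G.support) (hc : c ∈ G.support) (hd : d ∈ G.support)
    {e f : Sym2 U}
    (h1 : e ∈ pathEdges G a c) (h2 : e ∉ pathEdges G a b) (h3 : e ∉ pathEdges G c d)
    (h4 : f ∈ pathEdges G a b) (h5 : f ∉ pathEdges G a c) (h6 : f ∉ pathEdges G b d) :
    False := by
  -- derived separations
  have hfad : f ∈ pathEdges G a d := by
    rw [sep_xor hT ha hb hd f]
    exact Or.inl ⟨h4, h6⟩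
  have hfcd : f ∈ pathEdges G c d := by
    rw [sep_xor hT hc ha hd f]
    exact Or.inr ⟨hfad, fun hca => h5 (by rwa [pathEdges_comm G c a] at hca)⟩
  -- endpoints of f
  have hfE : f ∈ G.edgeSet := h4.1
  induction f with
  | _ v₁ v₂ =>
    have hadj : G.Adj v₁ v₂ := hfE
    have hv₁ : v₁ ∈ G.support := (SimpleGraph.mem_support _).mpr ⟨v₂, hadj⟩
    by_cases hv : e ∈ pathEdges G a v₁
    · -- v₁ on the c,d side of e; use the walk from a to b through v₁ avoiding e
      obtain ⟨P, hP⟩ := exists_isPath hT ha hb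
      have hfP : s(v₁, v₂) ∈ P.edges := (pathEdges_eq hT hP).mp h4
      have hv₁P : v₁ ∈ P.support := P.fst_mem_support_of_mem_edges hfP
      have heP : e ∉ P.edges := fun hmem => h2 ((pathEdges_eq hT hP).mpr hmem)
      have : e ∉ (P.takeUntil v₁ hv₁P).edges :=
        fun hmem => heP (P.edges_takeUntil_subset hv₁P hmem)
      exact this (hv.2 (P.takeUntil v₁ hv₁P))
    · -- v₁ on the a,b side of e; use the walk from c to d through v₁ avoiding e
      have hecv : e ∈ pathEdges G c v₁ := by
        rw [sep_xor hT hc ha hv₁ e]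
        exact Or.inl ⟨by rw [pathEdges_comm G c a]; exact h1, hv⟩
      obtain ⟨P, hP⟩ := exists_isPath hT hc hd
      have hfP : s(v₁, v₂) ∈ P.edges := (pathEdges_eq hT hP).mp hfcd
      have hv₁P : v₁ ∈ P.support := P.fst_mem_support_of_mem_edges hfP
      have heP : e ∉ P.edges := fun hmem => h3 ((pathEdges_eq hT hP).mpr hmem)
      have : e ∉ (P.takeUntil v₁ hv₁P).edges :=
        fun hmem => heP (P.edges_takeUntil_subset hv₁P hmem)
      exact this (hecv.2 (P.takeUntil v₁ hv₁P))

/-- every walk from a leaf starts with its pendant edge -/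
lemma pendant_mem_walk {G : SimpleGraph U} {l z a : U} (hl : IsLeaf G l)
    (hz : G.Adj l z) (hne : l ≠ a) (w : G.Walk l a) : s(l, z) ∈ w.edges := by
  obtain ⟨z', hz'⟩ := Set.ncard_eq_one.mp hl
  have hzz : z = z' := by
    have h0 : z ∈ G.neighborSet l := hz
    rw [hz'] at h0; exact h0
  subst hzz
  cases w with
  | nil => exact absurd rfl hne
  | cons h p =>
    rename_i b
    have hb : b = z := by
      have h0 : b ∈ G.neighborSet l := h
      rw [hz'] at h0; exact h0
    subst hb
    simp

lemma pendant_sep {G : SimpleGraph U} {l z a : U} (hl : IsLeaf G l)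
    (hz : G.Adj l z) (hne : l ≠ a) : s(l, z) ∈ pathEdges G l a :=
  ⟨G.mem_edgeSet.mpr hz, fun w => pendant_mem_walk hl hz hne w⟩

/-- a leaf incident to an edge on the path from `a` to `b` is `a` or `b`. -/
lemma leaf_end {X : Set U} {G : SimpleGraph U} (hT : IsXTree X G) {l a b : U} {e : Sym2 U}
    (hl : IsLeaf G l) (hin : l ∈ e) (hsep : e ∈ pathEdges G a b)
    (ha : a ∈ G.support) (hb : b ∈ G.support) : l = a ∨ l = b := by
  by_contra hcon
  push_neg at hcon
  obtain ⟨hla, hlb⟩ := hcon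
  obtain ⟨z', hz'⟩ := Set.ncard_eq_one.mp hl
  have hlz : G.Adj l z' := by
    have : z' ∈ G.neighborSet l := by rw [hz']; exact rfl
    exact this
  obtain ⟨P, hP⟩ := exists_isPath hT ha hb
  have heP : e ∈ P.edges := (pathEdges_eq hT hP).mp hsep
  obtain ⟨w, rfl⟩ := Sym2.mem_iff_exists.mp hin
  have hlP : l ∈ P.support := P.fst_mem_support_of_mem_edges heP
  have hspec := P.take_spec hlP
  have hnodup : (P.edges).Nodup := hP.isTrail.edges_nodup
  rw [← hspec, SimpleGraph.Walk.edges_append] at hnodup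
  have hdisj := List.disjoint_of_nodup_append hnodup
  -- pendant edge in both halves
  have h₁ : s(l, z') ∈ (P.takeUntil l hlP).edges := by
    have := pendant_mem_walk hl hlz hla (P.takeUntil l hlP).reverse
    rwa [SimpleGraph.Walk.edges_reverse, List.mem_reverse] at this
  have h₂ : s(l, z') ∈ (P.dropUntil l hlP).edges :=
    pendant_mem_walk hl hlz hlb (P.dropUntil l hlP)
  exact hdisj h₁ h₂


/-- `M(a,b)`: edges separating `{x,x'}` from `{a,b}`. -/
def Mq (G : SimpleGraph U) (x x' a b : U) : Set (Sym2 U) :=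
  {e | e ∈ pathEdges G x a ∧ e ∈ pathEdges G x' a ∧ e ∈ pathEdges G x b ∧ e ∈ pathEdges G x' b}

section MqLemmas

variable {X : Set U} {G : SimpleGraph U} {x x' : U}

lemma sep_xor' (hT : IsXTree X G) {a b c : U} (ha : a ∈ G.support) (hb : b ∈ G.support)
    (hc : c ∈ G.support) (e : Sym2 U) :
    e ∈ pathEdges G a c ↔ Xor' (e ∈ pathEdges G b a) (e ∈ pathEdges G b c) := by
  rw [sep_xor hT ha hb hc e, pathEdges_comm G a b]

lemma Mq_comm (G : SimpleGraph U) (x x' a b : U) : Mq G x x' a b = Mq G x x' b a := by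
  ext e; constructor <;> (rintro ⟨h1, h2, h3, h4⟩; exact ⟨h3, h4, h1, h2⟩)

lemma Mq_inter_sub {a b c : U} : Mq G x x' a c ∩ Mq G x x' b c ⊆ Mq G x x' a b := by
  rintro e ⟨⟨h1, h2, _, _⟩, ⟨h5, h6, _, _⟩⟩; exact ⟨h1, h2, h5, h6⟩

lemma Mq_edge {a b : U} {e : Sym2 U} (h : e ∈ Mq G x x' a b) : e ∈ G.edgeSet := h.1.1

lemma Mq_not_xx' (hT : IsXTree X G) (hx : x ∈ G.support) (hx' : x' ∈ G.support) {a b : U}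
    (ha : a ∈ G.support) {e : Sym2 U} (h : e ∈ Mq G x x' a b) :
    e ∉ pathEdges G x x' := by
  intro hxx
  rw [sep_xor hT hx ha hx' e] at hxx
  rcases hxx with ⟨h1, h2⟩ | ⟨h1, h2⟩
  · exact h2 (by rw [pathEdges_comm G a x']; exact h.2.1)
  · exact h2 h.1

lemma pE_other (hT : IsXTree X G) (hx : x ∈ G.support) (hx' : x' ∈ G.support) {c : U}
    (hc : c ∈ G.support) {e : Sym2 U} (hxx : e ∉ pathEdges G x x') :
    e ∈ pathEdges G x c ↔ e ∈ pathEdges G x' c := by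
  rw [sep_xor' hT hx' hx hc e]
  unfold Xor' Xor
  tauto

lemma Mq_comparable (hT : IsXTree X G) (hx : x ∈ G.support) (hx' : x' ∈ G.support) {a b c : U}
    (ha : a ∈ G.support) (hb : b ∈ G.support) (hc : c ∈ G.support) :
    Mq G x x' a b ⊆ Mq G x x' a c ∨ Mq G x x' a c ⊆ Mq G x x' a b := by
  by_contra hcon
  push_neg at hcon
  obtain ⟨h1, h2⟩ := hcon
  obtain ⟨e, he, heN⟩ := Set.not_subset.mp h1
  obtain ⟨f, hf, hfN⟩ := Set.not_subset.mp h2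
  obtain ⟨hexa, hex'a, hexb, hex'b⟩ := he
  obtain ⟨hfxa, hfx'a, hfxc, hfx'c⟩ := hf
  have hexx : e ∉ pathEdges G x x' := Mq_not_xx' hT hx hx' ha ⟨hexa, hex'a, hexb, hex'b⟩
  have hfxx : f ∉ pathEdges G x x' := Mq_not_xx' hT hx hx' ha ⟨hfxa, hfx'a, hfxc, hfx'c⟩
  have hexc : e ∉ pathEdges G x c := by
    intro h0
    exact heN ⟨hexa, hex'a, h0, (pE_other hT hx hx' hc hexx).mp h0⟩
  have hfxb : f ∉ pathEdges G x b := by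
    intro h0
    exact hfN ⟨hfxa, hfx'a, h0, (pE_other hT hx hx' hb hfxx).mp h0⟩
  refine compat hT ha hb hc hx (e := e) (f := f) ?_ ?_ ?_ ?_ ?_ ?_
  · rw [sep_xor' hT ha hx hc e]; exact Or.inl ⟨hexa, hexc⟩
  · rw [sep_xor' hT ha hx hb e]; rintro (⟨_, hn⟩ | ⟨_, hn⟩); exacts [hn hexb, hn hexa]
  · rw [pathEdges_comm G c x]; exact hexc
  · rw [sep_xor' hT ha hx hb f]; exact Or.inl ⟨hfxa, hfxb⟩
  · rw [sep_xor' hT ha hx hc f]; rintro (⟨_, hn⟩ | ⟨_, hn⟩); exacts [hn hfxc, hn hfxa]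
  · rw [pathEdges_comm G b x]; exact hfxb

lemma sub_eq_of_mid {P Q R : Set (Sym2 U)} (hPQ : P ⊆ Q) (hQR : Q ⊆ R) (hQRP : Q ∩ R ⊆ P) :
    P = Q := subset_antisymm hPQ (fun e he => hQRP ⟨he, hQR he⟩)

/-- Laminar trichotomy: among the three sets `M(a,b), M(a,c), M(b,c)`,
two are equal and contained in the third. -/
lemma Mq_laminar (hT : IsXTree X G) (hx : x ∈ G.support) (hx' : x' ∈ G.support) {a b c : U}
    (ha : a ∈ G.support) (hb : b ∈ G.support) (hc : c ∈ G.support) :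
    (Mq G x x' a b = Mq G x x' a c ∧ Mq G x x' a b ⊆ Mq G x x' b c) ∨
    (Mq G x x' a b = Mq G x x' b c ∧ Mq G x x' a b ⊆ Mq G x x' a c) ∨
    (Mq G x x' a c = Mq G x x' b c ∧ Mq G x x' a c ⊆ Mq G x x' a b) := by
  set P := Mq G x x' a b with hP
  set Q := Mq G x x' a c with hQ
  set R := Mq G x x' b c with hR
  have IPQ : P ∩ Q ⊆ R := by
    rw [hP, hQ, Mq_comm G x x' a b, Mq_comm G x x' a c]; exact Mq_inter_sub
  have IPR : P ∩ R ⊆ Q := by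
    rw [hP, hR, Mq_comm G x x' b c]; exact Mq_inter_sub
  have IQR : Q ∩ R ⊆ P := by
    rw [hQ, hR, hP]
    exact Mq_inter_sub
  have cPQ : P ⊆ Q ∨ Q ⊆ P := Mq_comparable hT hx hx' ha hb hc
  have cPR : P ⊆ R ∨ R ⊆ P := by
    rw [hP, hR, Mq_comm G x x' a b]
    exact Mq_comparable hT hx hx' hb ha hc
  have cQR : Q ⊆ R ∨ R ⊆ Q := by
    rw [hQ, hR, Mq_comm G x x' a c, Mq_comm G x x' b c]
    exact Mq_comparable hT hx hx' hc ha hb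
  rcases cPQ with hPQ | hQP <;> rcases cPR with hPR | hRP <;> rcases cQR with hQR | hRQ
  · exact Or.inl ⟨sub_eq_of_mid hPQ hQR IQR, hPR⟩
  · exact Or.inr (Or.inl ⟨sub_eq_of_mid hPR hRQ (fun e he => IQR ⟨he.2, he.1⟩), hPQ⟩)
  · exact Or.inl ⟨subset_antisymm hPQ (hQR.trans hRP), hPQ.trans hQR⟩
  · exact Or.inr (Or.inl ⟨(sub_eq_of_mid hRP hPQ IPQ).symm, hPQ⟩)
  · exact Or.inl ⟨(sub_eq_of_mid hQP hPR IPR).symm, hPR⟩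
  · exact Or.inl ⟨subset_antisymm (hPR.trans hRQ) hQP, hPR⟩
  · exact Or.inr (Or.inr ⟨sub_eq_of_mid hQR hRP (fun e he => IPR ⟨he.2, he.1⟩), hQP⟩)
  · exact Or.inr (Or.inr ⟨(sub_eq_of_mid hRQ hQP (fun _ he => IPQ ⟨he.2, he.1⟩)).symm, hQP⟩)

lemma Mq_cross_aux (hT : IsXTree X G) (hx : x ∈ G.support) (hx' : x' ∈ G.support)
    {y y' z zz : U} (hy : y ∈ G.support) (hy' : y' ∈ G.support) (hz : z ∈ G.support)
    (hzz : zz ∈ G.support)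
    (hyz : Mq G x x' y y' ⊂ Mq G x x' z y) (hy'z : Mq G x x' y y' ⊂ Mq G x x' zz y')
    {e : Sym2 U} (he : e ∈ Mq G x x' z zz) : e ∈ pathEdges G x y := by
  by_contra hxy
  obtain ⟨hxz, hx'z, hxzz, hx'zz⟩ := he
  have hexx : e ∉ pathEdges G x x' := Mq_not_xx' hT hx hx' hz ⟨hxz, hx'z, hxzz, hx'zz⟩
  obtain ⟨f, hf, hfN⟩ := Set.exists_of_ssubset hyz
  obtain ⟨hfxz, hfx'z, hfxy, hfx'y⟩ := hf
  have hfxx : f ∉ pathEdges G x x' := Mq_not_xx' hT hx hx' hz ⟨hfxz, hfx'z, hfxy, hfx'y⟩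
  by_cases hzf : f ∈ pathEdges G x zz
  · -- `f ∈ Mq z~ y`; use second strictness witness `g`
    have hfxy' : f ∉ pathEdges G x y' := by
      intro h0
      exact hfN ⟨hfxy, hfx'y, h0, (pE_other hT hx hx' hy' hfxx).mp h0⟩
    obtain ⟨g, hg, hgN⟩ := Set.exists_of_ssubset hy'z
    obtain ⟨hgxzz, hgx'zz, hgxy', hgx'y'⟩ := hg
    have hgxx : g ∉ pathEdges G x x' := Mq_not_xx' hT hx hx' hzz ⟨hgxzz, hgx'zz, hgxy', hgx'y'⟩
    have hgxy : g ∉ pathEdges G x y := by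
      intro h0
      exact hgN ⟨h0, (pE_other hT hx hx' hy hgxx).mp h0, hgxy', hgx'y'⟩
    refine compat hT hzz hy hy' hx (e := f) (f := g) ?_ ?_ ?_ ?_ ?_ ?_
    · rw [sep_xor' hT hzz hx hy' f]; exact Or.inl ⟨hzf, hfxy'⟩
    · rw [sep_xor' hT hzz hx hy f]; rintro (⟨_, hn⟩ | ⟨_, hn⟩); exacts [hn hfxy, hn hzf]
    · rw [pathEdges_comm G y' x]; exact hfxy'
    · rw [sep_xor' hT hzz hx hy g]; exact Or.inl ⟨hgxzz, hgxy⟩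
    · rw [sep_xor' hT hzz hx hy' g]; rintro (⟨_, hn⟩ | ⟨_, hn⟩); exacts [hn hgxy', hn hgxzz]
    · rw [pathEdges_comm G y x]; exact hgxy
  · -- `z~` on the `x` side of `f`
    refine compat hT hz hzz hy hx (e := e) (f := f) ?_ ?_ ?_ ?_ ?_ ?_
    · rw [sep_xor' hT hz hx hy e]; exact Or.inl ⟨hxz, hxy⟩
    · rw [sep_xor' hT hz hx hzz e]; rintro (⟨_, hn⟩ | ⟨_, hn⟩); exacts [hn hxzz, hn hxz]
    · rw [pathEdges_comm G y x]; exact hxy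
    · rw [sep_xor' hT hz hx hzz f]; exact Or.inl ⟨hfxz, hzf⟩
    · rw [sep_xor' hT hz hx hy f]; rintro (⟨_, hn⟩ | ⟨_, hn⟩); exacts [hn hfxy, hn hfxz]
    · rw [pathEdges_comm G zz x]; exact hzf

/-- F3a: if `z` lies in the branch of `y` and `z~` in the branch of `y'`, then
`M(z,z~) = M(y,y')`. -/
lemma Mq_cross (hT : IsXTree X G) (hx : x ∈ G.support) (hx' : x' ∈ G.support)
    {y y' z zz : U} (hy : y ∈ G.support) (hy' : y' ∈ G.support) (hz : z ∈ G.support)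
    (hzz : zz ∈ G.support)
    (hyz : Mq G x x' y y' ⊂ Mq G x x' z y) (hy'z : Mq G x x' y y' ⊂ Mq G x x' zz y') :
    Mq G x x' z zz = Mq G x x' y y' := by
  apply subset_antisymm
  · intro e he
    have h1 : e ∈ pathEdges G x y := Mq_cross_aux hT hx hx' hy hy' hz hzz hyz hy'z he
    have h2 : e ∈ pathEdges G x y' := by
      have hyz' : Mq G x x' y' y ⊂ Mq G x x' zz y' := by
        rwa [Mq_comm G x x' y' y]
      have hy'z' : Mq G x x' y' y ⊂ Mq G x x' z y := by
        rwa [Mq_comm G x x' y' y]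
      have he' : e ∈ Mq G x x' zz z := by rwa [Mq_comm G x x' zz z]
      exact Mq_cross_aux hT hx hx' hy' hy hzz hz hyz' hy'z' he'
    have hexx : e ∉ pathEdges G x x' := Mq_not_xx' hT hx hx' hz he
    exact ⟨h1, (pE_other hT hx hx' hy hexx).mp h1,
      h2, (pE_other hT hx hx' hy' hexx).mp h2⟩
  · intro e he
    obtain ⟨h1, h2, _, _⟩ := hyz.subset he
    obtain ⟨h3, h4, _, _⟩ := hy'z.subset he
    exact ⟨h1, h2, h3, h4⟩

end MqLemmas




section Sums

variable {X : Set U} {G : SimpleGraph U} {x x' : U} {ω : Sym2 U → ℝ}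

lemma edgeSet_finite (hT : IsXTree X G) : G.edgeSet.Finite := by
  have hsub : G.edgeSet ⊆ (fun p : U × U => s(p.1, p.2)) '' (G.support ×ˢ G.support) := by
    intro e he
    induction e with
    | _ a b =>
      exact ⟨(a, b), ⟨(SimpleGraph.mem_support _).mpr ⟨b, he⟩,
        (SimpleGraph.mem_support _).mpr ⟨a, (he : G.Adj a b).symm⟩⟩, rfl⟩
  exact ((hT.support_finite.prod hT.support_finite).image _).subset hsub

/-- total `ω`-mass of a set of edges -/
def massOf (ω : Sym2 U → ℝ) (S : Set (Sym2 U)) : ℝ := ∑ᶠ e ∈ S, ω e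

lemma massOf_eq_sum (hfin : G.edgeSet.Finite) {S : Set (Sym2 U)} (hS : S ⊆ G.edgeSet) :
    massOf ω S = ∑ e ∈ hfin.toFinset, if e ∈ S then ω e else 0 := by
  have hSeq : S = ↑(hfin.toFinset.filter (· ∈ S)) := by
    ext e
    simp only [Finset.coe_filter, Set.mem_setOf_eq, Set.Finite.mem_toFinset]
    exact ⟨fun h => ⟨hS h, h⟩, fun h => h.2⟩
  calc massOf ω S = ∑ᶠ e ∈ (↑(hfin.toFinset.filter (· ∈ S)) : Set (Sym2 U)), ω e := by
        rw [massOf, ← hSeq]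
    _ = ∑ e ∈ hfin.toFinset.filter (· ∈ S), ω e := finsum_mem_coe_finset _ _
    _ = ∑ e ∈ hfin.toFinset, if e ∈ S then ω e else 0 := Finset.sum_filter _ _

lemma tdist_eq_massOf (G : SimpleGraph U) (ω : Sym2 U → ℝ) (a b : U) :
    tdist G ω a b = massOf ω (pathEdges G a b) := rfl

lemma tdist_comm (G : SimpleGraph U) (ω : Sym2 U → ℝ) (a b : U) :
    tdist G ω a b = tdist G ω b a := by
  rw [tdist_eq_massOf, tdist_eq_massOf, pathEdges_comm]

lemma massOf_empty (ω : Sym2 U → ℝ) : massOf ω (∅ : Set (Sym2 U)) = 0 := by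
  simp [massOf]

lemma massOf_nonneg (hfin : G.edgeSet.Finite) {S : Set (Sym2 U)} (hS : S ⊆ G.edgeSet)
    (hnn : ∀ e, 0 ≤ ω e) : 0 ≤ massOf ω S := by
  rw [massOf_eq_sum hfin hS]
  exact Finset.sum_nonneg fun e _ => by by_cases he : e ∈ S <;> simp [he, hnn e]

lemma massOf_mono (hfin : G.edgeSet.Finite) {S T : Set (Sym2 U)} (hST : S ⊆ T)
    (hT : T ⊆ G.edgeSet) (hnn : ∀ e, 0 ≤ ω e) : massOf ω S ≤ massOf ω T := by
  rw [massOf_eq_sum hfin (hST.trans hT), massOf_eq_sum hfin hT]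
  refine Finset.sum_le_sum fun e _ => ?_
  by_cases he : e ∈ S
  · simp [he, hST he]
  · simp only [he, if_false]
    by_cases he' : e ∈ T <;> simp [he', hnn e]

lemma massOf_lt (hfin : G.edgeSet.Finite) {S T : Set (Sym2 U)} (hST : S ⊆ T)
    (hT : T ⊆ G.edgeSet) (hnn : ∀ e, 0 ≤ ω e) {f : Sym2 U} (hfT : f ∈ T) (hfS : f ∉ S)
    (hf : 0 < ω f) : massOf ω S < massOf ω T := by
  rw [massOf_eq_sum hfin (hST.trans hT), massOf_eq_sum hfin hT]
  refine Finset.sum_lt_sum (fun e _ => ?_) ⟨f, hfin.mem_toFinset.mpr (hT hfT), ?_⟩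
  · by_cases he : e ∈ S
    · simp [he, hST he]
    · simp only [he, if_false]
      by_cases he' : e ∈ T <;> simp [he', hnn e]
  · simp [hfS, hfT, hf]

lemma massOf_pos (hfin : G.edgeSet.Finite) {S : Set (Sym2 U)} (hS : S ⊆ G.edgeSet)
    (hnn : ∀ e, 0 ≤ ω e) {f : Sym2 U} (hfS : f ∈ S) (hf : 0 < ω f) : 0 < massOf ω S := by
  have := massOf_lt (ω := ω) hfin (Set.empty_subset S) hS hnn hfS (by simp) hf
  rwa [massOf_empty] at this

lemma nonempty_of_massOf_pos {S : Set (Sym2 U)} (h : 0 < massOf ω S) : S.Nonempty := by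
  rcases S.eq_empty_or_nonempty with rfl | hne
  · rw [massOf_empty] at h; exact absurd h (lt_irrefl 0)
  · exact hne

/-- positivity of weights on quartet-separating edges -/
lemma Mq_edge_pos (hT : IsXTree X G) (hω : IsProperWeighting G ω) {a b : U}
    (hx : x ∈ G.support) (hx' : x' ∈ G.support) (ha : a ∈ G.support) (hb : b ∈ G.support)
    (hxx : x ≠ x') (hxa : x ≠ a) (hxb : x ≠ b) (hx'a : x' ≠ a) (hx'b : x' ≠ b) (hab : a ≠ b)
    {e : Sym2 U} (he : e ∈ Mq G x x' a b) : 0 < ω e := by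
  refine hω.interior_pos e (Mq_edge he) fun w hw hlf => ?_
  obtain ⟨h1, h2, h3, h4⟩ := he
  rcases leaf_end hT hlf hw h1 hx ha with h1' | h1'
  · rcases leaf_end hT hlf hw h2 hx' ha with h2' | h2'
    · exact hxx (h1'.symm.trans h2')
    · exact hxa (h1'.symm.trans h2')
  · rcases leaf_end hT hlf hw h3 hx hb with h3' | h3'
    · exact hxa (h3'.symm.trans h1')
    · exact hab (h1'.symm.trans h3')

/-- the "cross" set: edges separating `{x,a}` from `{x',b}`. -/
def Cq (G : SimpleGraph U) (x x' a b : U) : Set (Sym2 U) :=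
  {e | e ∈ pathEdges G x x' ∧ e ∈ pathEdges G a b ∧ e ∈ pathEdges G x b ∧
       e ∈ pathEdges G x' a ∧ e ∉ pathEdges G x a ∧ e ∉ pathEdges G x' b}

lemma Cq_edge {a b : U} {e : Sym2 U} (h : e ∈ Cq G x x' a b) : e ∈ G.edgeSet := h.1.1

lemma per_edge (hT : IsXTree X G) (hx : x ∈ G.support) (hx' : x' ∈ G.support) {a b : U}
    (ha : a ∈ G.support) (hb : b ∈ G.support) (ω : Sym2 U → ℝ) (e : Sym2 U) :
    (if e ∈ pathEdges G x a then ω e else 0) + (if e ∈ pathEdges G x' b then ω e else 0)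
      - (if e ∈ pathEdges G x x' then ω e else 0) - (if e ∈ pathEdges G a b then ω e else 0)
    = 2 * (if e ∈ Mq G x x' a b then ω e else 0) - 2 * (if e ∈ Cq G x x' a b then ω e else 0) := by
  have h1 : (e ∈ pathEdges G x' a) ↔ Xor' (e ∈ pathEdges G x x') (e ∈ pathEdges G x a) :=
    sep_xor' hT hx' hx ha e
  have h2 : (e ∈ pathEdges G x' b) ↔ Xor' (e ∈ pathEdges G x x') (e ∈ pathEdges G x b) :=
    sep_xor' hT hx' hx hb e
  have h3 : (e ∈ pathEdges G a b) ↔ Xor' (e ∈ pathEdges G x a) (e ∈ pathEdges G x b) :=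
    sep_xor' hT ha hx hb e
  simp only [Mq, Cq, Set.mem_setOf_eq, h1, h2, h3]
  by_cases s1 : e ∈ pathEdges G x x' <;> by_cases s2 : e ∈ pathEdges G x a <;>
    by_cases s3 : e ∈ pathEdges G x b <;>
    · simp [s1, s2, s3, Xor']
      try ring

lemma diff_eq (hT : IsXTree X G) (hx : x ∈ G.support) (hx' : x' ∈ G.support) {a b : U}
    (ha : a ∈ G.support) (hb : b ∈ G.support) (ω : Sym2 U → ℝ) :
    tdist G ω x a + tdist G ω x' b - tdist G ω x x' - tdist G ω a b
      = 2 * massOf ω (Mq G x x' a b) - 2 * massOf ω (Cq G x x' a b) := by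
  have hfin := edgeSet_finite hT
  rw [tdist_eq_massOf, tdist_eq_massOf, tdist_eq_massOf, tdist_eq_massOf,
    massOf_eq_sum hfin (fun e (he : e ∈ pathEdges G x a) => he.1),
    massOf_eq_sum hfin (fun e (he : e ∈ pathEdges G x' b) => he.1),
    massOf_eq_sum hfin (fun e (he : e ∈ pathEdges G x x') => he.1),
    massOf_eq_sum hfin (fun e (he : e ∈ pathEdges G a b) => he.1),
    massOf_eq_sum hfin (fun e (he : e ∈ Mq G x x' a b) => Mq_edge he),
    massOf_eq_sum hfin (fun e (he : e ∈ Cq G x x' a b) => Cq_edge he),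
    Finset.mul_sum, Finset.mul_sum, ← Finset.sum_add_distrib, ← Finset.sum_sub_distrib,
    ← Finset.sum_sub_distrib, ← Finset.sum_sub_distrib]
  exact Finset.sum_congr rfl fun e _ => per_edge hT hx hx' ha hb ω e

lemma Cq_exclusive (hT : IsXTree X G) (hx : x ∈ G.support) (hx' : x' ∈ G.support) {a b : U}
    (ha : a ∈ G.support) (hb : b ∈ G.support) :
    ¬ ((Cq G x x' a b).Nonempty ∧ (Cq G x x' b a).Nonempty) := by
  rintro ⟨⟨e, he⟩, ⟨f, hf⟩⟩
  exact compat hT hx ha hb hx' he.2.2.1 he.2.2.2.2.1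
    (by rw [pathEdges_comm G b x']; exact he.2.2.2.2.2) hf.2.2.1 hf.2.2.2.2.1
    (by rw [pathEdges_comm G a x']; exact hf.2.2.2.2.2)

lemma Cq_empty_of_Mq_nonempty (hT : IsXTree X G) (hx : x ∈ G.support) (hx' : x' ∈ G.support)
    {a b : U} (ha : a ∈ G.support) (hb : b ∈ G.support) (hM : (Mq G x x' a b).Nonempty) :
    Cq G x x' a b = ∅ := by
  obtain ⟨e, he⟩ := hM
  rw [Set.eq_empty_iff_forall_notMem]
  intro f hf
  refine compat hT hx hx' ha hb (e := e) (f := f) he.1 (Mq_not_xx' hT hx hx' ha he)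
    ?_ hf.1 hf.2.2.2.2.1 hf.2.2.2.2.2
  · intro hab
    rw [sep_xor' hT ha hx hb e] at hab
    rcases hab with ⟨_, hn⟩ | ⟨_, hn⟩
    exacts [hn he.2.2.1, hn he.1]

/-- The magic formula: `D(xx'|ab) = 2 ω(M(a,b))` in any tree. -/
lemma Dq_eq_massOf (hT : IsXTree X G) (hω : IsProperWeighting G ω) {a b : U}
    (hx : x ∈ G.support) (hx' : x' ∈ G.support) (ha : a ∈ G.support) (hb : b ∈ G.support) :
    Dq G ω x x' a b = 2 * massOf ω (Mq G x x' a b) := by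
  have hfin := edgeSet_finite hT
  have hd1 := diff_eq hT hx hx' ha hb ω
  have hd2 := diff_eq hT hx hx' hb ha ω
  rw [tdist_comm G ω b a, Mq_comm G x x' b a] at hd2
  have hC1nn : 0 ≤ massOf ω (Cq G x x' a b) :=
    massOf_nonneg hfin (fun e he => Cq_edge he) hω.nonneg
  have hC2nn : 0 ≤ massOf ω (Cq G x x' b a) :=
    massOf_nonneg hfin (fun e he => Cq_edge he) hω.nonneg
  unfold Dq
  rw [← max_sub_sub_right, ← max_sub_sub_right, hd1, hd2]
  by_cases hC1 : (Cq G x x' a b).Nonempty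
  · have hC2 : Cq G x x' b a = ∅ := by
      rw [← Set.not_nonempty_iff_eq_empty]
      intro hC2
      exact Cq_exclusive hT hx hx' ha hb ⟨hC1, hC2⟩
    have hMe : Mq G x x' a b = ∅ := by
      rw [← Set.not_nonempty_iff_eq_empty]
      intro hM
      have := Cq_empty_of_Mq_nonempty hT hx hx' ha hb hM
      rw [this] at hC1
      exact Set.not_nonempty_empty hC1
    rw [hC2, hMe, massOf_empty]
    rw [max_eq_right (by linarith)]
    ring
  · have hC1e : Cq G x x' a b = ∅ := Set.not_nonempty_iff_eq_empty.mp hC1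
    rw [hC1e, massOf_empty]
    rw [max_eq_left (by linarith)]
    ring

end Sums


section Main

variable {X : Set U} {G G' : SimpleGraph U} {x x' : U} {ω ω' : Sym2 U → ℝ} {L : Set (Sym2 U)}

/-- the pendant edge of a leaf separates it strictly beyond any `M₀`. -/
lemma Mq_pendant (hT : IsXTree X G) (hx : x ∈ G.support) (hx' : x' ∈ G.support)
    {y y' : U} (hyX : y ∈ X) (hy' : y' ∈ G.support)
    (hxy : x ≠ y) (hx'y : x' ≠ y) (hy'y : y' ≠ y) :
    Mq G x x' y y' ⊂ Mq G x x' y y := by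
  have hl : IsLeaf G y := by rw [hT.leaves_eq] at hyX; exact hyX
  obtain ⟨z, hz⟩ := Set.ncard_eq_one.mp hl
  have hadj : G.Adj y z := by
    have h0 : z ∈ G.neighborSet y := by rw [hz]; exact rfl
    exact h0
  have hsub0 : Mq G x x' y y' ⊆ Mq G x x' y y := by
    rintro e ⟨h1, h2, _, _⟩; exact ⟨h1, h2, h1, h2⟩
  rw [Set.ssubset_iff_of_subset hsub0]
  have hp1 : s(y,z) ∈ pathEdges G x y := by
    rw [pathEdges_comm]; exact pendant_sep hl hadj (fun h => hxy h.symm)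
  have hp2 : s(y,z) ∈ pathEdges G x' y := by
    rw [pathEdges_comm]; exact pendant_sep hl hadj (fun h => hx'y h.symm)
  refine ⟨s(y,z), ⟨hp1, hp2, hp1, hp2⟩, fun hmem' => ?_⟩
  rcases leaf_end hT hl (Sym2.mem_mk_left y z) hmem'.2.2.1 hx hy' with h | h
  · exact hxy h.symm
  · exact hy'y h.symm

/-- The key per-cord lemma: for a cord of `Γ(L,c)`, masses agree. -/
lemma cord_mass_eq (hT : IsXTree X G) (hT' : IsXTree X G') (hω : IsProperWeighting G ω)
    (hω' : IsProperWeighting G' ω') (hiso : LIso L G ω G' ω')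
    (hxX : x ∈ X) (hx'X : x' ∈ X) (hcord : s(x,x') ∈ L)
    {u v : U} (huX : u ∈ X) (hvX : v ∈ X)
    (hxx : x ≠ x') (hxu : x ≠ u) (hxv : x ≠ v) (hx'u : x' ≠ u) (hx'v : x' ≠ v) (huv : u ≠ v)
    (hLxu : s(x,u) ∈ L) (hLx'v : s(x',v) ∈ L) (hLuv : s(u,v) ∈ L)
    (hMne : (Mq G x x' u v).Nonempty) :
    massOf ω' (Mq G' x x' u v) = massOf ω (Mq G x x' u v) := by
  have hfin := edgeSet_finite hT
  have hfin' := edgeSet_finite hT'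
  have hx1 := X_support hT hxX
  have hx'1 := X_support hT hx'X
  have hu1 := X_support hT huX
  have hv1 := X_support hT hvX
  have hx2 := X_support hT' hxX
  have hx'2 := X_support hT' hx'X
  have hu2 := X_support hT' huX
  have hv2 := X_support hT' hvX
  have hC : Cq G x x' u v = ∅ := Cq_empty_of_Mq_nonempty hT hx1 hx'1 hu1 hv1 hMne
  have hd := diff_eq hT hx1 hx'1 hu1 hv1 ω
  have hd' := diff_eq hT' hx2 hx'2 hu2 hv2 ω'
  rw [hC, massOf_empty] at hd
  have e1 : tdist G ω x u = tdist G' ω' x u := hiso x u hLxu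
  have e2 : tdist G ω x' v = tdist G' ω' x' v := hiso x' v hLx'v
  have e3 : tdist G ω x x' = tdist G' ω' x x' := hiso x x' hcord
  have e4 : tdist G ω u v = tdist G' ω' u v := hiso u v hLuv
  have hMpos : 0 < massOf ω (Mq G x x' u v) := by
    obtain ⟨f, hf⟩ := hMne
    exact massOf_pos hfin (fun e he => Mq_edge he) hω.nonneg hf
      (Mq_edge_pos hT hω hx1 hx'1 hu1 hv1 hxx hxu hxv hx'u hx'v huv hf)
  have hC'nn : 0 ≤ massOf ω' (Cq G' x x' u v) :=
    massOf_nonneg hfin' (fun e he => Cq_edge he) hω'.nonneg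
  have hM'pos : 0 < massOf ω' (Mq G' x x' u v) := by linarith
  have hC' : Cq G' x x' u v = ∅ :=
    Cq_empty_of_Mq_nonempty hT' hx2 hx'2 hu2 hv2 (nonempty_of_massOf_pos hM'pos)
  rw [hC', massOf_empty] at hd'
  linarith

/-- a walk from inside `P` to outside `P` crosses `P`'s boundary. -/
lemma walk_cross {H : SimpleGraph U} {P : Set U} :
    ∀ {a b : U}, H.Walk a b → a ∈ P → b ∉ P → ∃ u v, H.Adj u v ∧ u ∈ P ∧ v ∉ P := by
  intro a b w
  induction w with
  | nil => intro h1 h2; exact absurd h1 h2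
  | @cons c d q h p ih =>
    intro h1 h2
    by_cases hd : d ∈ P
    · exact ih hd h2
    · exact ⟨c, d, h, h1, hd⟩

/-- branch sets -/
def Bbr (G : SimpleGraph U) (X : Set U) (x x' y y' w : U) : Set U :=
  {z | z ∈ X ∧ z ≠ x ∧ z ≠ x' ∧ Mq G x x' y y' ⊂ Mq G x x' z w}

/-- the inner contradiction of the virtual-split lemma -/
lemma F1_inner (hT : IsXTree X G) (hx : x ∈ G.support) (hx' : x' ∈ G.support)
    {y y' a r b : U} (ha : a ∈ G.support) (hr : r ∈ G.support) (hb : b ∈ G.support)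
    (hstr : Mq G x x' y y' ⊂ Mq G x x' a r)
    (hbr : Mq G x x' b r ⊆ Mq G x x' y y')
    {e : Sym2 U} (heM : e ∈ Mq G x x' a b) (heM0 : e ∉ Mq G x x' y y') : False := by
  obtain ⟨hexa, hex'a, hexb, hex'b⟩ := heM
  have hexx : e ∉ pathEdges G x x' := Mq_not_xx' hT hx hx' ha ⟨hexa, hex'a, hexb, hex'b⟩
  by_cases hre : e ∈ pathEdges G x r
  · exact heM0 (hbr ⟨hexb, hex'b, hre, (pE_other hT hx hx' hr hexx).mp hre⟩)
  · obtain ⟨f, hf, hfN⟩ := Set.exists_of_ssubset hstr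
    obtain ⟨hfxa, hfx'a, hfxr, hfx'r⟩ := hf
    have hfxx : f ∉ pathEdges G x x' := Mq_not_xx' hT hx hx' ha ⟨hfxa, hfx'a, hfxr, hfx'r⟩
    by_cases hbg : f ∈ pathEdges G x b
    · exact hfN (hbr ⟨hbg, (pE_other hT hx hx' hb hfxx).mp hbg, hfxr, hfx'r⟩)
    · refine compat hT ha hb hr hx (e := e) (f := f) ?_ ?_ ?_ ?_ ?_ ?_
      · rw [sep_xor' hT ha hx hr e]; exact Or.inl ⟨hexa, hre⟩
      · rw [sep_xor' hT ha hx hb e]; rintro (⟨_, hn⟩ | ⟨_, hn⟩); exacts [hn hexb, hn hexa]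
      · rw [pathEdges_comm G r x]; exact hre
      · rw [sep_xor' hT ha hx hb f]; exact Or.inl ⟨hfxa, hbg⟩
      · rw [sep_xor' hT ha hx hr f]; rintro (⟨_, hn⟩ | ⟨_, hn⟩); exacts [hn hfxr, hn hfxa]
      · rw [pathEdges_comm G b x]; exact hbg

end Main


section Main2

variable {X : Set U} {G G' : SimpleGraph U} {x x' : U} {ω ω' : Sym2 U → ℝ} {L : Set (Sym2 U)}

lemma notA_char (hT : IsXTree X G) (hx : x ∈ G.support) (hx' : x' ∈ G.support)
    {y y' b : U} (hy : y ∈ G.support) (hy' : y' ∈ G.support) (hb : b ∈ G.support)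
    (hbX : b ∈ X) (hbx : b ≠ x) (hbx' : b ≠ x')
    (hnb1 : b ∉ Bbr G X x x' y y' y) (hnb2 : b ∉ Bbr G X x x' y y' y') :
    Mq G x x' b y ⊆ Mq G x x' y y' ∧ Mq G x x' b y' ⊆ Mq G x x' y y' := by
  have h1 : ¬ (Mq G x x' y y' ⊂ Mq G x x' b y) := fun h => hnb1 ⟨hbX, hbx, hbx', h⟩
  have h2 : ¬ (Mq G x x' y y' ⊂ Mq G x x' b y') := fun h => hnb2 ⟨hbX, hbx, hbx', h⟩
  rcases Mq_laminar hT hx hx' hb hy hy' with ⟨heq, hsub⟩ | ⟨heq, hsub⟩ | ⟨heq, hsub⟩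
  · exact ⟨hsub, by rw [← heq]; exact hsub⟩
  · have hRQ : Mq G x x' y y' ⊆ Mq G x x' b y' := by rw [← heq]; exact hsub
    have hQ : Mq G x x' b y' = Mq G x x' y y' := by
      by_contra hne
      exact h2 (hRQ.ssubset_of_ne (fun h => hne h.symm))
    exact ⟨heq.subset, hQ.subset⟩
  · have hRQ : Mq G x x' y y' ⊆ Mq G x x' b y := by rw [← heq]; exact hsub
    have hQ : Mq G x x' b y = Mq G x x' y y' := by
      by_contra hne
      exact h1 (hRQ.ssubset_of_ne (fun h => hne h.symm))
    exact ⟨hQ.subset, heq.subset⟩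

lemma F1_noQ (hT : IsXTree X G)
    (hx1 : x ∈ G.support) (hx'1 : x' ∈ G.support)
    {y y' : U} (hy1 : y ∈ G.support) (hy'1 : y' ∈ G.support)
    (hM0ne : (Mq G x x' y y').Nonempty)
    {a a' b b' : U}
    (haX : a ∈ X) (ha'X : a' ∈ X) (hbX : b ∈ X) (hb'X : b' ∈ X)
    (haA : a ∈ Bbr G X x x' y y' y ∪ Bbr G X x x' y y' y')
    (ha'A : a' ∈ Bbr G X x x' y y' y ∪ Bbr G X x x' y y' y')
    (hbA : b ∉ Bbr G X x x' y y' y ∪ Bbr G X x x' y y' y')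
    (hb'A : b' ∉ Bbr G X x x' y y' y ∪ Bbr G X x x' y y' y')
    (hq : DisplaysQ G a b a' b') : False := by
  have ha : a ∈ G.support := X_support hT haX
  have ha' : a' ∈ G.support := X_support hT ha'X
  have hb : b ∈ G.support := X_support hT hbX
  have hb' : b' ∈ G.support := X_support hT hb'X
  obtain ⟨e, he1, he2, he3, he4⟩ := hq
  have hM0K : ∀ z, z ∈ Bbr G X x x' y y' y ∪ Bbr G X x x' y y' y' →
      ∀ g ∈ Mq G x x' y y', g ∈ pathEdges G x z ∧ g ∈ pathEdges G x' z := by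
    rintro z (⟨_, _, _, hzs⟩ | ⟨_, _, _, hzs⟩) g hg <;>
    · have h0 := hzs.subset hg
      exact ⟨h0.1, h0.2.1⟩
  obtain ⟨g0, hg0⟩ := hM0ne
  have hg0xx : g0 ∉ pathEdges G x x' := Mq_not_xx' hT hx1 hx'1 hy1 hg0
  have hga := hM0K a haA g0 hg0
  have hga' := hM0K a' ha'A g0 hg0
  have hg0aa' : g0 ∉ pathEdges G a a' := by
    rw [sep_xor' hT ha hx1 ha' g0]
    rintro (⟨_, hn⟩ | ⟨_, hn⟩); exacts [hn hga'.1, hn hga.1]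
  have heM0 : e ∉ Mq G x x' y y' := by
    intro hmem
    have k1 := (hM0K a haA e hmem).1
    have k2 := (hM0K a' ha'A e hmem).1
    rw [sep_xor' hT ha hx1 ha' e] at he1
    rcases he1 with ⟨_, hn⟩ | ⟨_, hn⟩; exacts [hn k2, hn k1]
  by_cases h2 : e ∈ pathEdges G x a <;> by_cases h2' : e ∈ pathEdges G x' a
  · -- (T,T) : x and x' both separated from a
    have hexx : e ∉ pathEdges G x x' := by
      rw [sep_xor hT hx1 ha hx'1 e]
      rintro (⟨_, hn⟩ | ⟨_, hn⟩)
      · exact hn (by rw [pathEdges_comm G a x']; exact h2')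
      · exact hn h2
    have heab : e ∉ pathEdges G a b := by
      rw [sep_xor hT ha ha' hb e]
      rintro (⟨_, hn⟩ | ⟨_, hn⟩)
      · exact hn (by rw [pathEdges_comm G a' b]; exact he3)
      · exact hn he1
    have hexb : e ∈ pathEdges G x b := by
      rw [sep_xor hT hx1 ha hb e]; exact Or.inl ⟨h2, heab⟩
    have hex'b : e ∈ pathEdges G x' b := (pE_other hT hx1 hx'1 hb hexx).mp hexb
    have hbx : b ≠ x := (pE_ne hexb).symm
    have hbx' : b ≠ x' := (pE_ne hex'b).symm
    have hchar := notA_char hT hx1 hx'1 hy1 hy'1 hb hbX hbx hbx'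
      (fun h => hbA (Or.inl h)) (fun h => hbA (Or.inr h))
    rcases haA with ⟨_, _, _, hsuby⟩ | ⟨_, _, _, hsuby'⟩
    · exact F1_inner hT hx1 hx'1 ha hy1 hb hsuby hchar.1 ⟨h2, h2', hexb, hex'b⟩ heM0
    · exact F1_inner hT hx1 hx'1 ha hy'1 hb hsuby' hchar.2 ⟨h2, h2', hexb, hex'b⟩ heM0
  · -- (T,F) : e ∈ pE x a, e ∉ pE x' a : compat on (a, x', a', x)
    refine compat hT ha hx'1 ha' hx1 (e := e) (f := g0) he1 ?_ ?_ ?_ ?_ ?_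
    · rw [pathEdges_comm G a x']; exact h2'
    · intro hp
      have hp2 : e ∈ pathEdges G x a' := by rw [pathEdges_comm G x a']; exact hp
      rw [sep_xor hT hx1 ha ha' e] at hp2
      rcases hp2 with ⟨_, hn⟩ | ⟨_, hn⟩; exacts [hn he1, hn h2]
    · rw [pathEdges_comm G a x']; exact hga.2
    · exact hg0aa'
    · rw [pathEdges_comm G x' x]; exact hg0xx
  · -- (F,T) : compat on (a, x, a', x')
    refine compat hT ha hx1 ha' hx'1 (e := e) (f := g0) he1 ?_ ?_ ?_ ?_ ?_
    · rw [pathEdges_comm G a x]; exact h2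
    · intro hp
      have hp2 : e ∈ pathEdges G x' a' := by rw [pathEdges_comm G x' a']; exact hp
      rw [sep_xor hT hx'1 ha ha' e] at hp2
      rcases hp2 with ⟨_, hn⟩ | ⟨_, hn⟩
      · exact hn he1
      · exact hn h2'
    · rw [pathEdges_comm G a x]; exact hga.1
    · exact hg0aa'
    · exact hg0xx
  · -- (F,F) : mirror with (a', b')
    have hexa' : e ∈ pathEdges G x a' := by
      rw [sep_xor hT hx1 ha ha' e]; exact Or.inr ⟨he1, h2⟩
    have hexx : e ∉ pathEdges G x x' := by
      rw [sep_xor hT hx1 ha hx'1 e]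
      rintro (⟨hp, _⟩ | ⟨hp, _⟩)
      · exact h2 hp
      · exact h2' (by rw [pathEdges_comm G x' a]; exact hp)
    have hex'a' : e ∈ pathEdges G x' a' := (pE_other hT hx1 hx'1 ha' hexx).mp hexa'
    have hea'b' : e ∉ pathEdges G a' b' := by
      rw [sep_xor hT ha' ha hb' e]
      rintro (⟨_, hn⟩ | ⟨_, hn⟩)
      · exact hn he2
      · exact hn (by rw [pathEdges_comm G a' a]; exact he1)
    have hexb' : e ∈ pathEdges G x b' := by
      rw [sep_xor hT hx1 ha' hb' e]; exact Or.inl ⟨hexa', hea'b'⟩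
    have hex'b' : e ∈ pathEdges G x' b' := (pE_other hT hx1 hx'1 hb' hexx).mp hexb'
    have hb'x : b' ≠ x := (pE_ne hexb').symm
    have hb'x' : b' ≠ x' := (pE_ne hex'b').symm
    have hchar := notA_char hT hx1 hx'1 hy1 hy'1 hb' hb'X hb'x hb'x'
      (fun h => hb'A (Or.inl h)) (fun h => hb'A (Or.inr h))
    rcases ha'A with ⟨_, _, _, hsuby⟩ | ⟨_, _, _, hsuby'⟩
    · exact F1_inner hT hx1 hx'1 ha' hy1 hb' hsuby hchar.1 ⟨hexa', hex'a', hexb', hex'b'⟩ heM0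
    · exact F1_inner hT hx1 hx'1 ha' hy'1 hb' hsuby' hchar.2 ⟨hexa', hex'a', hexb', hex'b'⟩ heM0

lemma Bbr_mono_left (hT : IsXTree X G) (hx1 : x ∈ G.support) (hx'1 : x' ∈ G.support)
    {y y' u : U} (hy1 : y ∈ G.support) (hy'1 : y' ∈ G.support) (hu1 : u ∈ G.support)
    (hyX : y ∈ X) (hxy : x ≠ y) (hx'y : x' ≠ y) (hy'y : y' ≠ y)
    (hu : u ∈ Bbr G X x x' y y' y) :
    Bbr G X x x' y u y ∪ Bbr G X x x' y u u ⊆ Bbr G X x x' y y' y := by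
  have hustr : Mq G x x' y y' ⊂ Mq G x x' u y := hu.2.2.2
  have hustr' : Mq G x x' y y' ⊂ Mq G x x' y u := by
    rw [Mq_comm G x x' y u]; exact hustr
  rintro z (⟨hzX, hzx, hzx', hzs⟩ | ⟨hzX, hzx, hzx', hzs⟩)
  · exact ⟨hzX, hzx, hzx', hustr'.trans hzs⟩
  · refine ⟨hzX, hzx, hzx', ?_⟩
    by_cases hzu : z = u
    · rw [hzu]; exact hustr
    by_cases hzy : z = y
    · rw [hzy]; exact Mq_pendant hT hx1 hx'1 hyX hy'1 hxy hx'y hy'y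
    have hRP : Mq G x x' u y ⊂ Mq G x x' z u := by
      rw [Mq_comm G x x' u y]; exact hzs
    have hz1 := X_support hT hzX
    rcases Mq_laminar hT hx1 hx'1 hz1 hu1 hy1 with ⟨heq, hsub⟩ | ⟨heq, hsub⟩ | ⟨heq, hsub⟩
    · exact absurd (hRP.trans_le hsub) (lt_irrefl _)
    · rw [heq] at hRP; exact absurd hRP (lt_irrefl _)
    · rw [heq]; exact hustr

lemma Bbr_mono_right (hT : IsXTree X G) (hx1 : x ∈ G.support) (hx'1 : x' ∈ G.support)
    {y y' v : U} (hy1 : y ∈ G.support) (hy'1 : y' ∈ G.support) (hv1 : v ∈ G.support)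
    (hy'X : y' ∈ X) (hxy' : x ≠ y') (hx'y' : x' ≠ y') (hyy' : y ≠ y')
    (hv : v ∈ Bbr G X x x' y y' y') :
    Bbr G X x x' v y' v ∪ Bbr G X x x' v y' y' ⊆ Bbr G X x x' y y' y' := by
  have hvstr : Mq G x x' y y' ⊂ Mq G x x' v y' := hv.2.2.2
  rintro z (⟨hzX, hzx, hzx', hzs⟩ | ⟨hzX, hzx, hzx', hzs⟩)
  · refine ⟨hzX, hzx, hzx', ?_⟩
    by_cases hzv : z = v
    · rw [hzv]; exact hvstr
    by_cases hzy' : z = y'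
    · rw [hzy']
      have hpend := Mq_pendant hT hx1 hx'1 hy'X hy1 hxy' hx'y' hyy'
      rwa [Mq_comm G x x' y' y] at hpend
    have hz1 := X_support hT hzX
    rcases Mq_laminar hT hx1 hx'1 hz1 hv1 hy'1 with ⟨heq, hsub⟩ | ⟨heq, hsub⟩ | ⟨heq, hsub⟩
    · exact absurd (hzs.trans_le hsub) (lt_irrefl _)
    · rw [heq] at hzs; exact absurd hzs (lt_irrefl _)
    · rw [heq]; exact hvstr
  · exact ⟨hzX, hzx, hzx', hvstr.trans hzs⟩

end Main2

/-- Theorem 3, first part: under the connectivity assumption on `Γ(L, c)`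
for the cord `c = x x' ∈ L`, any `L`-isometric properly edge-weighted
`X`-trees `(T,ω)`, `(T',ω')` satisfy `D_ω(xx'|yy') = D_{ω'}(xx'|yy')` for all
distinct `y, y' ∈ X − {x,x'}` with `xx' ‖ yy' ∈ Q(T)`. -/
theorem cord_quartet_values_agree {U : Type}
    (X : Set U) (G : SimpleGraph U)
    (hXfin : X.Finite) (hX3 : 3 ≤ X.ncard) (hT : IsXTree X G)
    (L : Set (Sym2 U)) (hL : IsCordSet X L) (hcup : cup L = X)
    (x x' : U) (hxx' : x ≠ x') (hcord : s(x, x') ∈ L)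
    (hconn : ∀ A : Set U, A ⊆ X \ {x, x'} → VirtualSplit X G A (X \ A) →
      ConnectedOn (cordGraphC X G L x x') A)
    (ω : Sym2 U → ℝ) (hω : IsProperWeighting G ω)
    (G' : SimpleGraph U) (hT' : IsXTree X G')
    (ω' : Sym2 U → ℝ) (hω' : IsProperWeighting G' ω')
    (hiso : LIso L G ω G' ω') :
    ∀ y y' : U, y ∈ X \ ({x, x'} : Set U) → y' ∈ X \ ({x, x'} : Set U) →
      y ≠ y' → QuartetOf X G x x' y y' →
      Dq G ω x x' y y' = Dq G' ω' x x' y y' := by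
  have hxX : x ∈ X := (hL _ hcord).2 x (Sym2.mem_mk_left x x')
  have hx'X : x' ∈ X := (hL _ hcord).2 x' (Sym2.mem_mk_right x x')
  have hx1 := X_support hT hxX
  have hx'1 := X_support hT hx'X
  have hx2 := X_support hT' hxX
  have hx'2 := X_support hT' hx'X
  have hfin := edgeSet_finite hT
  have hfin' := edgeSet_finite hT'
  suffices H : ∀ n : ℕ, ∀ y y' : U, y ∈ X \ ({x, x'} : Set U) → y' ∈ X \ ({x, x'} : Set U) →
      y ≠ y' → QuartetOf X G x x' y y' →
      (Bbr G X x x' y y' y ∪ Bbr G X x x' y y' y').ncard ≤ n →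
      Dq G ω x x' y y' = Dq G' ω' x x' y y' by
    intro y y' hy hy' hne hq
    exact H _ y y' hy hy' hne hq le_rfl
  intro n
  induction n with
  | zero =>
    intro y y' hy hy' hne hq hcard
    exfalso
    have hy2 := hy.2
    have hy'2 := hy'.2
    simp only [Set.mem_insert_iff, Set.mem_singleton_iff, not_or] at hy2 hy'2
    obtain ⟨hyx, hyx'⟩ := hy2
    have hy1 := X_support hT hy.1
    have hy'1 := X_support hT hy'.1
    obtain ⟨_, _, _, _, ⟨d1, d2, d3, d4, d5, d6⟩, _⟩ := hq
    have hyB1 : y ∈ Bbr G X x x' y y' y :=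
      ⟨hy.1, hyx, hyx', Mq_pendant hT hx1 hx'1 hy.1 hy'1 d2 d4 hne.symm⟩
    have hAfin : (Bbr G X x x' y y' y ∪ Bbr G X x x' y y' y').Finite :=
      hXfin.subset (by rintro z (h | h) <;> exact h.1)
    have h0 : (Bbr G X x x' y y' y ∪ Bbr G X x x' y y' y').ncard = 0 := Nat.le_zero.mp hcard
    rw [Set.ncard_eq_zero hAfin] at h0
    rw [Set.eq_empty_iff_forall_notMem] at h0
    exact h0 y (Or.inl hyB1)
  | succ n IH =>
    intro y y' hy hy' hne hq hcard
    have hyX := hy.1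
    have hy'X := hy'.1
    have hy2 := hy.2
    have hy'2 := hy'.2
    simp only [Set.mem_insert_iff, Set.mem_singleton_iff, not_or] at hy2 hy'2
    obtain ⟨hyx, hyx'⟩ := hy2
    obtain ⟨hy'x, hy'x'⟩ := hy'2
    have hy1 := X_support hT hyX
    have hy'1 := X_support hT hy'X
    have hy2' := X_support hT' hyX
    have hy'2' := X_support hT' hy'X
    obtain ⟨_, _, _, _, ⟨d1, d2, d3, d4, d5, d6⟩, estar, hp1, hp2, hp3, hp4⟩ := hq
    have hestar : estar ∈ Mq G x x' y y' := ⟨hp1, hp3, hp2, hp4⟩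
    have hM0ne : (Mq G x x' y y').Nonempty := ⟨estar, hestar⟩
    set B1 := Bbr G X x x' y y' y with hB1def
    set B2 := Bbr G X x x' y y' y' with hB2def
    have hyB1 : y ∈ B1 :=
      ⟨hyX, hyx, hyx', Mq_pendant hT hx1 hx'1 hyX hy'1 d2 d4 hne.symm⟩
    have hy'B2 : y' ∈ B2 := by
      refine ⟨hy'X, hy'x, hy'x', ?_⟩
      have hpend := Mq_pendant hT hx1 hx'1 hy'X hy1 d3 d5 hne
      rwa [Mq_comm G x x' y' y] at hpend
    have hdisj : ∀ z, z ∈ B1 → z ∈ B2 → False := by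
      intro z hz1 hz2
      have hcross := Mq_cross hT hx1 hx'1 hy1 hy'1 (X_support hT hz1.1) hy'1
        hz1.2.2.2 hy'B2.2.2.2
      have := hz2.2.2.2
      rw [← hcross] at this
      exact absurd this (lt_irrefl _)
    have hAsubX : B1 ∪ B2 ⊆ X \ ({x, x'} : Set U) := by
      rintro z (⟨h1, h2, h3, _⟩ | ⟨h1, h2, h3, _⟩) <;>
        exact ⟨h1, by simp only [Set.mem_insert_iff, Set.mem_singleton_iff, not_or]; exact ⟨h2, h3⟩⟩
    have hAX : B1 ∪ B2 ⊆ X := fun z hz => (hAsubX hz).1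
    have hAfin : (B1 ∪ B2).Finite := hXfin.subset hAX
    have hsplit : VirtualSplit X G (B1 ∪ B2) (X \ (B1 ∪ B2)) := by
      refine ⟨⟨y, Or.inl hyB1⟩, ⟨x, hxX, fun hxA => ?_⟩, Set.disjoint_sdiff_right,
        Set.union_diff_cancel hAX, ?_⟩
      · have := (hAsubX hxA).2
        simp at this
      · intro a ha a' ha' b hb b' hb' hnaa hnbb
        constructor
        · intro hq'
          exact F1_noQ hT hx1 hx'1 hy1 hy'1 hM0ne (hAX ha) (hAX ha') hb.1 hb'.1
            ha ha' hb.2 hb'.2 hq'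
        · intro hq'
          exact F1_noQ hT hx1 hx'1 hy1 hy'1 hM0ne (hAX ha) (hAX ha') hb'.1 hb.1
            ha ha' hb'.2 hb.2 hq'
    have hreach := hconn (B1 ∪ B2) hAsubX hsplit y (Or.inl hyB1) y' (Or.inr hy'B2)
    obtain ⟨wlk⟩ := hreach
    have hy'nB1 : y' ∉ B1 := fun h => hdisj y' h hy'B2
    obtain ⟨u, v, hadjH, huB1, hvnB1⟩ := walk_cross wlk hyB1 hy'nB1
    obtain ⟨hGam, huA, hvA⟩ := hadjH
    have hvB2 : v ∈ B2 := hvA.resolve_left hvnB1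
    obtain ⟨huvne, hux, hux', hvx, hvx', hLuv, hquv, hor⟩ := hGam
    have huX : u ∈ X := huB1.1
    have hvX : v ∈ X := hvB2.1
    have hu1 := X_support hT huX
    have hv1 := X_support hT hvX
    have hu2 := X_support hT' huX
    have hv2 := X_support hT' hvX
    have hMuvne : (Mq G x x' u v).Nonempty := by
      obtain ⟨_, _, _, _, _, f, q1, q2, q3, q4⟩ := hquv
      exact ⟨f, q1, q3, q2, q4⟩
    have hmassuv : massOf ω' (Mq G' x x' u v) = massOf ω (Mq G x x' u v) := by
      rcases hor with ⟨hLxu, hLx'v⟩ | ⟨hLxv, hLx'u⟩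
      · exact cord_mass_eq hT hT' hω hω' hiso hxX hx'X hcord huX hvX hxx'
          (Ne.symm hux) (Ne.symm hvx) (Ne.symm hux') (Ne.symm hvx') huvne
          hLxu hLx'v hLuv hMuvne
      · have hswap := cord_mass_eq hT hT' hω hω' hiso hxX hx'X hcord hvX huX hxx'
          (Ne.symm hvx) (Ne.symm hux) (Ne.symm hvx') (Ne.symm hux') (Ne.symm huvne)
          hLxv hLx'u (by rw [Sym2.eq_swap]; exact hLuv)
          (by rw [Mq_comm G x x' v u]; exact hMuvne)
        rwa [Mq_comm G x x' v u, Mq_comm G' x x' v u] at hswap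
    have hMuveq : Mq G x x' u v = Mq G x x' y y' :=
      Mq_cross hT hx1 hx'1 hy1 hy'1 hu1 hv1 huB1.2.2.2 hvB2.2.2.2
    rw [hMuveq] at hmassuv
    -- step (a): mass' M'(y,v) = mass M₀
    have hyv : massOf ω' (Mq G' x x' y v) = massOf ω (Mq G x x' y y') := by
      by_cases hyu : u = y
      · subst hyu; exact hmassuv
      · have hMyu_str : Mq G x x' y y' ⊂ Mq G x x' y u := by
          have h0 := huB1.2.2.2
          rwa [Mq_comm G x x' u y] at h0
        have hqu : QuartetOf X G x x' y u := by
          refine ⟨hxX, hx'X, hyX, huX,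
            ⟨d1, d2, Ne.symm hux, d4, Ne.symm hux', fun h => hyu h.symm⟩, estar, ?_⟩
          obtain ⟨k1, k2, k3, k4⟩ := hMyu_str.subset hestar
          exact ⟨k1, k3, k2, k4⟩
        have hsubB := Bbr_mono_left hT hx1 hx'1 hy1 hy'1 hu1 hyX d2 d4 hne.symm huB1
        have hsub2 : Bbr G X x x' y u y ∪ Bbr G X x x' y u u ⊆ (B1 ∪ B2) \ {y'} := by
          intro z hz
          refine ⟨Or.inl (hsubB hz), fun hzy => ?_⟩
          rw [Set.mem_singleton_iff] at hzy
          rw [hzy] at hz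
          exact hy'nB1 (hsubB hz)
        have hcard1 : (Bbr G X x x' y u y ∪ Bbr G X x x' y u u).ncard ≤ n := by
          have hle := Set.ncard_le_ncard hsub2 hAfin.diff
          have hlt := Set.ncard_diff_singleton_lt_of_mem (show y' ∈ B1 ∪ B2 from Or.inr hy'B2) hAfin
          omega
        have hIH := IH y u hy ⟨huX, by
          simp only [Set.mem_insert_iff, Set.mem_singleton_iff, not_or]
          exact ⟨hux, hux'⟩⟩ (fun h => hyu h.symm) hqu hcard1
        rw [Dq_eq_massOf hT hω hx1 hx'1 hy1 hu1,
          Dq_eq_massOf hT' hω' hx2 hx'2 hy2' hu2] at hIH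
        have hmassyu : massOf ω' (Mq G' x x' y u) = massOf ω (Mq G x x' y u) := by
          linarith
        have hgt : massOf ω (Mq G x x' y y') < massOf ω (Mq G x x' y u) := by
          obtain ⟨f, hfT, hfS⟩ := Set.exists_of_ssubset hMyu_str
          exact massOf_lt hfin hMyu_str.subset (fun e he => Mq_edge he) hω.nonneg hfT hfS
            (Mq_edge_pos hT hω hx1 hx'1 hy1 hu1 d1 d2 (Ne.symm hux) d4 (Ne.symm hux')
              (fun h => hyu h.symm) hfT)
        rcases Mq_laminar hT' hx2 hx'2 hy2' hu2 hv2 with ⟨heq, hsub⟩ | ⟨heq, hsub⟩ | ⟨heq, hsub⟩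
        · exfalso
          have hmono := massOf_mono hfin' hsub (fun e he => Mq_edge he) hω'.nonneg
          rw [hmassyu, hmassuv] at hmono
          linarith
        · exfalso
          have heqm : massOf ω' (Mq G' x x' y u) = massOf ω' (Mq G' x x' u v) := by rw [heq]
          rw [hmassyu, hmassuv] at heqm
          linarith
        · rw [heq]; exact hmassuv
    -- step (b): mass' M'(y,y') = mass M₀
    have hyy'mass : massOf ω' (Mq G' x x' y y') = massOf ω (Mq G x x' y y') := by
      by_cases hvy : v = y'
      · subst hvy; exact hyv
      · have hMvy_str : Mq G x x' y y' ⊂ Mq G x x' v y' := hvB2.2.2.2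
        have hqv : QuartetOf X G x x' v y' := by
          refine ⟨hxX, hx'X, hvX, hy'X,
            ⟨d1, Ne.symm hvx, d3, Ne.symm hvx', d5, hvy⟩, estar, ?_⟩
          obtain ⟨k1, k2, k3, k4⟩ := hMvy_str.subset hestar
          exact ⟨k1, k3, k2, k4⟩
        have hsubB := Bbr_mono_right hT hx1 hx'1 hy1 hy'1 hv1 hy'X d3 d5 hne hvB2
        have hynB2 : y ∉ B2 := fun h => hdisj y hyB1 h
        have hsub2 : Bbr G X x x' v y' v ∪ Bbr G X x x' v y' y' ⊆ (B1 ∪ B2) \ {y} := by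
          intro z hz
          refine ⟨Or.inr (hsubB hz), fun hzy => ?_⟩
          rw [Set.mem_singleton_iff] at hzy
          rw [hzy] at hz
          exact hynB2 (hsubB hz)
        have hcard1 : (Bbr G X x x' v y' v ∪ Bbr G X x x' v y' y').ncard ≤ n := by
          have hle := Set.ncard_le_ncard hsub2 hAfin.diff
          have hlt := Set.ncard_diff_singleton_lt_of_mem (show y ∈ B1 ∪ B2 from Or.inl hyB1) hAfin
          omega
        have hIH := IH v y' ⟨hvX, by
          simp only [Set.mem_insert_iff, Set.mem_singleton_iff, not_or]
          exact ⟨hvx, hvx'⟩⟩ hy' hvy hqv hcard1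
        rw [Dq_eq_massOf hT hω hx1 hx'1 hv1 hy'1,
          Dq_eq_massOf hT' hω' hx2 hx'2 hv2 hy'2'] at hIH
        have hmassvy : massOf ω' (Mq G' x x' v y') = massOf ω (Mq G x x' v y') := by
          linarith
        have hgt2 : massOf ω (Mq G x x' y y') < massOf ω (Mq G x x' v y') := by
          obtain ⟨f, hfT, hfS⟩ := Set.exists_of_ssubset hMvy_str
          exact massOf_lt hfin hMvy_str.subset (fun e he => Mq_edge he) hω.nonneg hfT hfS
            (Mq_edge_pos hT hω hx1 hx'1 hv1 hy'1 d1 (Ne.symm hvx) d3 (Ne.symm hvx') d5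
              hvy hfT)
        rcases Mq_laminar hT' hx2 hx'2 hy2' hv2 hy'2' with ⟨heq, hsub⟩ | ⟨heq, hsub⟩ | ⟨heq, hsub⟩
        · rw [← heq]; exact hyv
        · exfalso
          have heqm : massOf ω' (Mq G' x x' y v) = massOf ω' (Mq G' x x' v y') := by rw [heq]
          rw [hyv, hmassvy] at heqm
          linarith
        · exfalso
          have heqm : massOf ω' (Mq G' x x' y y') = massOf ω' (Mq G' x x' v y') := by rw [heq]
          have hmono := massOf_mono hfin' hsub (fun e he => Mq_edge he) hω'.nonneg
          rw [hyv] at hmono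
          rw [hmassvy] at heqm
          linarith
    rw [Dq_eq_massOf hT hω hx1 hx'1 hy1 hy'1,
      Dq_eq_massOf hT' hω' hx2 hx'2 hy2' hy'2', hyy'mass]

end Lasso
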